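/- arXiv:2007.09340 — 2 statements merged into one kernel-verified Lean document; each statement's English description precedes it below -/
import Mathlib

section
/- Special case of the decomposition claim: let F, F' ⊆ [0,1) be finite with F \ F' = {t} and F' \ F = {t'} (singletons). Then for every (F ∩ F')-timed automorphism π, there exist finitely many automorphisms π₁,...,πₙ, each either an F- or an F'-timed automorphism, such that π(t) = (πₙ ∘ ... ∘ π₁)(t). -/
/-- A timed automorphism: a monotone bijection `π : ℝ → ℝ` with `π (x+1) = π x + 1`. -/
def IsTimedAutomorphism (π : ℝ → ℝ) : Prop :=
  Function.Bijective π ∧ StrictMono π ∧ ∀ x : ℝ, π (x + 1) = π x + 1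

/-- An `S`-timed automorphism: a timed automorphism fixing every point of `S`. -/
def IsSTimedAutomorphism (S : Set ℝ) (π : ℝ → ℝ) : Prop :=
  IsTimedAutomorphism π ∧ ∀ t ∈ S, π t = t

/-- A timed word: a finite sequence of letters with nonnegative, nondecreasing timestamps. -/
def IsTimedWord {A : Type*} (w : List (A × ℝ)) : Prop :=
  (∀ p ∈ w, 0 ≤ p.2) ∧ (w.map Prod.snd).Chain' (· ≤ ·)

/-- Pointwise action of a real function on the timestamps of a timed word. -/
def mapTW {A : Type*} (π : ℝ → ℝ) (w : List (A × ℝ)) : List (A × ℝ) :=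
  w.map fun p => (p.1, π p.2)

/-- The ℤ-periodization of a set. -/
def SZ (S : Set ℝ) : Set ℝ := {x | ∃ s ∈ S, ∃ k : ℤ, x = s + k}

lemma SZ_union (A B : Set ℝ) : SZ (A ∪ B) = SZ A ∪ SZ B := by
  ext x
  constructor
  · rintro ⟨s, hs | hs, k, rfl⟩
    · exact Or.inl ⟨s, hs, k, rfl⟩
    · exact Or.inr ⟨s, hs, k, rfl⟩
  · rintro (⟨s, hs, k, rfl⟩ | ⟨s, hs, k, rfl⟩)
    · exact ⟨s, Or.inl hs, k, rfl⟩
    · exact ⟨s, Or.inr hs, k, rfl⟩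

lemma mem_SZ_singleton {c x : ℝ} : x ∈ SZ {c} ↔ ∃ k : ℤ, x = c + k := by
  constructor
  · rintro ⟨s, hs, k, rfl⟩; rw [Set.mem_singleton_iff] at hs; exact ⟨k, by rw [hs]⟩
  · rintro ⟨k, rfl⟩; exact ⟨c, rfl, k, rfl⟩

lemma timed_int {π : ℝ → ℝ} (h : IsTimedAutomorphism π) : ∀ (x : ℝ) (k : ℤ), π (x + k) = π x + k := by
  intro x k
  induction k using Int.induction_on with
  | zero => simp
  | succ n ih =>
      have := h.2.2 (x + n)
      push_cast at ih ⊢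
      rw [← add_assoc, this, ih]; ring
  | pred n ih =>
      have := h.2.2 (x + (-n - 1))
      push_cast at ih ⊢
      have h2 : x + (-n - 1) + 1 = x + -n := by ring
      rw [h2] at this
      rw [show x + (-n - 1) = x + (-↑n - 1) by ring] at this
      have : π (x + (-↑n - 1)) = π (x + -↑n) - 1 := by linarith
      rw [this, ih]; ring

lemma sfixes_SZ {S : Set ℝ} {π : ℝ → ℝ} (h : IsSTimedAutomorphism S π) :
    ∀ z ∈ SZ S, π z = z := by
  rintro z ⟨s, hs, k, rfl⟩
  rw [timed_int h.1, h.2 s hs]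

/-- Disjointness of periodizations. -/
lemma SZ_disjoint {c : ℝ} {G : Set ℝ} (hc : c ∈ Set.Ico (0:ℝ) 1) (hG : G ⊆ Set.Ico (0:ℝ) 1)
    (hcG : c ∉ G) : ∀ z ∈ SZ {c}, z ∉ SZ G := by
  rintro z hz ⟨g, hg, k', rfl⟩
  rw [mem_SZ_singleton] at hz
  obtain ⟨k, hk⟩ := hz
  obtain ⟨hg0, hg1⟩ := hG hg
  obtain ⟨hc0, hc1⟩ := hc
  have hkk : ((k' - k : ℤ) : ℝ) = c - g := by push_cast; linarith
  have h1 : ((k' - k : ℤ) : ℝ) < 1 := by rw [hkk]; linarith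
  have h2 : (-1 : ℝ) < ((k' - k : ℤ) : ℝ) := by rw [hkk]; linarith
  have : (k' - k : ℤ) = 0 := by
    have a1 : (k' - k : ℤ) < 1 := by exact_mod_cast h1
    have a2 : (-1 : ℤ) < (k' - k : ℤ) := by exact_mod_cast h2
    omega
  have : c = g := by rw [this] at hkk; norm_num at hkk; linarith
  exact hcG (this ▸ hg)

lemma SZ_inter_Ioo_finite (c x y : ℝ) : (SZ {c} ∩ Set.Ioo x y).Finite := by
  apply Set.Finite.subset ((Set.finite_Icc (⌈x - c⌉) ⌊y - c⌋).biUnion (fun k _ => Set.finite_singleton (c + k)))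
  rintro z ⟨hz, hz1, hz2⟩
  rw [mem_SZ_singleton] at hz
  obtain ⟨k, rfl⟩ := hz
  refine Set.mem_biUnion ?_ rfl
  simp only [Set.mem_Icc]
  constructor
  · rw [Int.ceil_le]; linarith
  · rw [Int.le_floor]; linarith

set_option maxHeartbeats 1000000 in
lemma exists_move (S : Set ℝ) (hfin : S.Finite) (hsub : S ⊆ Set.Ico (0:ℝ) 1)
    (a b : ℝ) (hsep : ∀ z ∈ SZ S, (z < a ∧ z < b) ∨ (a < z ∧ b < z)) :
    ∃ σ, IsSTimedAutomorphism S σ ∧ σ a = b := by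
  rcases S.eq_empty_or_nonempty with rfl | ⟨s₀, hs₀⟩
  · refine ⟨fun x => x + (b - a), ⟨⟨⟨fun x y h => by dsimp at h; linarith,
      fun y => ⟨y - (b - a), by ring⟩⟩, fun x y h => by dsimp; linarith,
      fun x => by ring⟩, fun s hs => absurd hs (Set.notMem_empty s)⟩, by ring⟩
  set m := min a b with hm
  set M := max a b with hM
  -- the largest SZ point below m
  set P := SZ S ∩ Set.Ico (m - 1) m with hP
  have hPfin : P.Finite := by
    apply Set.Finite.subset (hfin.biUnion (fun s _ => (Set.finite_Icc (⌈m - 2⌉) ⌊m⌋).image (fun k : ℤ => s + k)))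
    rintro z ⟨⟨s, hs, k, rfl⟩, hz1, hz2⟩
    obtain ⟨h0, h1⟩ := hsub hs
    refine Set.mem_biUnion hs ⟨k, ?_, rfl⟩
    simp only [Set.mem_Icc]
    constructor
    · rw [Int.ceil_le]; linarith
    · rw [Int.le_floor]; linarith
  have hPne : P.Nonempty := by
    refine ⟨s₀ + (⌈m - s₀⌉ - 1 : ℤ), ⟨s₀, hs₀, _, rfl⟩, ?_, ?_⟩
    · have := Int.le_ceil (m - s₀); push_cast; linarith
    · have := Int.ceil_lt_add_one (m - s₀); push_cast; linarith
  obtain ⟨p, hpP, hpmax⟩ := Set.exists_max_image P id hPfin hPne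
  obtain ⟨hpSZ, hp1, hp2⟩ := hpP
  -- the smallest SZ point ≥ M
  set Q := SZ S ∩ Set.Ico M (M + 1) with hQ
  have hQfin : Q.Finite := by
    apply Set.Finite.subset (hfin.biUnion (fun s _ => (Set.finite_Icc (⌈M - 1⌉) ⌊M + 1⌋).image (fun k : ℤ => s + k)))
    rintro z ⟨⟨s, hs, k, rfl⟩, hz1, hz2⟩
    obtain ⟨h0, h1⟩ := hsub hs
    refine Set.mem_biUnion hs ⟨k, ?_, rfl⟩
    simp only [Set.mem_Icc]
    constructor
    · rw [Int.ceil_le]; linarith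
    · rw [Int.le_floor]; linarith
  have hQne : Q.Nonempty := by
    refine ⟨s₀ + ⌈M - s₀⌉, ⟨s₀, hs₀, _, rfl⟩, ?_, ?_⟩
    · have := Int.le_ceil (M - s₀); linarith
    · have := Int.ceil_lt_add_one (M - s₀); linarith
  obtain ⟨q, hqQ, hqmin⟩ := Set.exists_min_image Q id hQfin hQne
  obtain ⟨hqSZ, hq1, hq2⟩ := hqQ
  have hma : m ≤ a := min_le_left a b
  have hmb : m ≤ b := min_le_right a b
  have haM : a ≤ M := le_max_left a b
  have hbM : b ≤ M := le_max_right a b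
  have hpa : p < a := lt_of_lt_of_le hp2 hma
  have hpb : p < b := lt_of_lt_of_le hp2 hmb
  have haq : a < q := by
    rcases hsep q hqSZ with ⟨h1, _⟩ | ⟨h1, _⟩
    · linarith
    · exact h1
  have hbq : b < q := by
    rcases hsep q hqSZ with ⟨_, h1⟩ | ⟨_, h1⟩
    · linarith
    · exact h1
  have hp1SZ : p + 1 ∈ SZ S := by
    obtain ⟨s, hs, k, rfl⟩ := hpSZ
    exact ⟨s, hs, k + 1, by push_cast; ring⟩
  have hqp1 : q ≤ p + 1 := by
    rcases hsep (p + 1) hp1SZ with ⟨h1, h2⟩ | ⟨h1, h2⟩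
    · have : p + 1 < m := lt_min h1 h2
      linarith
    · have : M < p + 1 := max_lt h1 h2
      have : p + 1 ∈ Q := ⟨hp1SZ, le_of_lt this, by linarith⟩
      exact hqmin _ this
  have hnogap : ∀ z ∈ SZ S, z ≤ p ∨ q ≤ z := by
    intro z hz
    rcases hsep z hz with ⟨h1, h2⟩ | ⟨h1, h2⟩
    · have hzm : z < m := lt_min h1 h2
      by_contra hcon
      push_neg at hcon
      obtain ⟨hc1, hc2⟩ := hcon
      exact absurd (hpmax z ⟨hz, by linarith, hzm⟩) (by simpa using hc1)
    · have hzM : M < z := max_lt h1 h2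
      by_contra hcon
      push_neg at hcon
      obtain ⟨hc1, hc2⟩ := hcon
      exact absurd (hqmin z ⟨hz, le_of_lt hzM, by linarith⟩) (by simpa using hc2)
  clear hpmax hqmin hPfin hPne hQfin hQne hsep
  -- slopes
  set s₁ := (b - p) / (a - p) with hs₁def
  set s₂ := (q - b) / (q - a) with hs₂def
  have hs₁ : 0 < s₁ := div_pos (by linarith) (by linarith)
  have hs₂ : 0 < s₂ := div_pos (by linarith) (by linarith)
  have hapne : a - p ≠ 0 := ne_of_gt (by linarith)
  have hqane : q - a ≠ 0 := ne_of_gt (by linarith)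
  have key1 : (a - p) * s₁ = b - p := by
    rw [hs₁def]; field_simp
  have key2 : (q - a) * s₂ = q - b := by
    rw [hs₂def]; field_simp
  set h : ℝ → ℝ := fun y => if q ≤ y then y else if y ≤ a then p + (y - p) * s₁ else q - (q - y) * s₂ with hh
  have hha : h a = b := by
    simp only [hh]
    rw [if_neg (not_le.mpr haq), if_pos (le_refl a)]
    nlinarith [key1]
  have hK1 : ∀ y, p ≤ y → y < p + 1 → p ≤ h y ∧ h y < p + 1 := by
    intro y hy1 hy2
    simp only [hh]
    split_ifs with h1 h2
    · exact ⟨hy1, hy2⟩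
    · constructor
      · nlinarith
      · nlinarith [mul_le_mul_of_nonneg_right (by linarith : y - p ≤ a - p) (le_of_lt hs₁)]
    · push_neg at h1 h2
      constructor
      · nlinarith [mul_le_mul_of_nonneg_right (by linarith : q - y ≤ q - a) (le_of_lt hs₂)]
      · nlinarith
  have hK2 : ∀ y z, p ≤ y → y < z → z < p + 1 → h y < h z := by
    intro y z hy1 hyz hz2
    simp only [hh]
    by_cases hqy : q ≤ y
    · rw [if_pos hqy, if_pos (by linarith : q ≤ z)]
      exact hyz
    · by_cases hya : y ≤ a
      · rw [if_neg hqy, if_pos hya]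
        by_cases hqz : q ≤ z
        · rw [if_pos hqz]
          nlinarith [mul_le_mul_of_nonneg_right (by linarith : y - p ≤ a - p) (le_of_lt hs₁)]
        · rw [if_neg hqz]
          by_cases hza : z ≤ a
          · rw [if_pos hza]
            nlinarith
          · rw [if_neg hza]
            push_neg at hqz hza
            nlinarith [mul_le_mul_of_nonneg_right (by linarith : y - p ≤ a - p) (le_of_lt hs₁),
              mul_lt_mul_of_pos_right (by linarith : q - z < q - a) hs₂]
      · push_neg at hqy hya
        rw [if_neg (not_le.mpr hqy), if_neg (not_le.mpr hya)]
        by_cases hqz : q ≤ z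
        · rw [if_pos hqz]
          nlinarith
        · have hza : ¬ z ≤ a := by push_neg; linarith
          rw [if_neg hqz, if_neg hza]
          push_neg at hqz
          nlinarith
  have hK3 : ∀ z, p ≤ z → z < p + 1 → ∃ y, p ≤ y ∧ y < p + 1 ∧ h y = z := by
    intro z hz1 hz2
    by_cases hqz : q ≤ z
    · exact ⟨z, hz1, hz2, by simp only [hh]; rw [if_pos hqz]⟩
    · push_neg at hqz
      by_cases hzb : z ≤ b
      · refine ⟨p + (z - p) / s₁, ?_, ?_, ?_⟩
        · have : 0 ≤ (z - p) / s₁ := div_nonneg (by linarith) (le_of_lt hs₁)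
          linarith
        · have hle : (z - p) / s₁ ≤ a - p := by
            rw [div_le_iff₀ hs₁]
            nlinarith
          linarith
        · have hya : p + (z - p) / s₁ ≤ a := by
            have hle : (z - p) / s₁ ≤ a - p := by
              rw [div_le_iff₀ hs₁]
              nlinarith
            linarith
          simp only [hh]
          rw [if_neg (not_le.mpr (lt_of_le_of_lt hya haq)), if_pos hya]
          field_simp
          ring
      · push_neg at hzb
        refine ⟨q - (q - z) / s₂, ?_, ?_, ?_⟩
        · have : (q - z) / s₂ < q - a := by
            rw [div_lt_iff₀ hs₂]
            linarith [key2]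
          linarith
        · have : 0 < (q - z) / s₂ := div_pos (by linarith) hs₂
          linarith
        · have hgt : a < q - (q - z) / s₂ := by
            have : (q - z) / s₂ < q - a := by
              rw [div_lt_iff₀ hs₂]
              nlinarith
            linarith
          have hlt : q - (q - z) / s₂ < q := by
            have : 0 < (q - z) / s₂ := div_pos (by linarith) hs₂
            linarith
          simp only [hh]
          rw [if_neg (not_le.mpr hlt), if_neg (not_le.mpr hgt)]
          have : q - (q - (q - (q - z) / s₂)) * s₂ = q - ((q - z) / s₂) * s₂ := by ring_nf
          rw [this]
          field_simp
          ring
  have hfixh : ∀ y ∈ SZ S, p ≤ y → y < p + 1 → h y = y := by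
    intro y hy hy1 hy2
    rcases hnogap y hy with h1 | h1
    · have : y = p := le_antisymm h1 hy1
      rw [this]
      simp only [hh]
      rw [if_neg (not_le.mpr (by linarith : p < q)), if_pos (by linarith : p ≤ a)]
      ring
    · simp only [hh]; rw [if_pos h1]
  set σ : ℝ → ℝ := fun x => (⌊x - p⌋ : ℝ) + h (p + Int.fract (x - p)) with hσ
  have hdom : ∀ x : ℝ, p ≤ p + Int.fract (x - p) ∧ p + Int.fract (x - p) < p + 1 := by
    intro x
    constructor
    · have := Int.fract_nonneg (x - p); linarith
    · have := Int.fract_lt_one (x - p); linarith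
  have hper : ∀ x, σ (x + 1) = σ x + 1 := by
    intro x
    simp only [hσ]
    have e1 : x + 1 - p = (x - p) + 1 := by ring
    simp only [e1, Int.fract_add_one, Int.floor_add_one]
    push_cast
    ring
  have hmono : StrictMono σ := by
    intro x y hxy
    simp only [hσ]
    have hfl : ⌊x - p⌋ ≤ ⌊y - p⌋ := Int.floor_le_floor (by linarith)
    rcases eq_or_lt_of_le hfl with heq | hlt
    · have hfr : Int.fract (x - p) < Int.fract (y - p) := by
        have e1 : Int.fract (x - p) = (x - p) - ⌊x - p⌋ := (Int.self_sub_floor (x - p)).symm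
        have e2 : Int.fract (y - p) = (y - p) - ⌊y - p⌋ := (Int.self_sub_floor (y - p)).symm
        rw [e1, e2, heq]
        linarith
      have := hK2 _ _ (hdom x).1 (by linarith) (hdom y).2
      rw [heq]
      linarith
    · have h1 := (hK1 _ (hdom x).1 (hdom x).2).2
      have h2 := (hK1 _ (hdom y).1 (hdom y).2).1
      have : (⌊x - p⌋ : ℝ) + 1 ≤ (⌊y - p⌋ : ℝ) := by exact_mod_cast hlt
      linarith
  have hsurj : Function.Surjective σ := by
    intro z
    obtain ⟨y, hy1, hy2, hy3⟩ := hK3 (p + Int.fract (z - p)) (hdom z).1 (hdom z).2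
    refine ⟨y + ⌊z - p⌋, ?_⟩
    simp only [hσ]
    have e1 : y + (⌊z - p⌋ : ℝ) - p = (y - p) + (⌊z - p⌋ : ℤ) := by push_cast; ring
    rw [e1, Int.fract_add_intCast, Int.floor_add_intCast]
    have hyfr : Int.fract (y - p) = y - p := Int.fract_eq_self.mpr ⟨by linarith, by linarith⟩
    rw [hyfr]
    have hfl0 : ⌊y - p⌋ = 0 := Int.floor_eq_zero_iff.mpr ⟨by linarith, by linarith⟩
    rw [hfl0]
    push_cast
    rw [show p + (y - p) = y by ring, hy3]
    have := Int.floor_add_fract (z - p)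
    linarith
  have hfixS : ∀ s ∈ S, σ s = s := by
    intro s hs
    simp only [hσ]
    have hySZ : p + Int.fract (s - p) ∈ SZ S := by
      have : p + Int.fract (s - p) = s + (-⌊s - p⌋ : ℤ) := by
        have := Int.floor_add_fract (s - p)
        push_cast
        linarith
      rw [this]
      exact ⟨s, hs, _, rfl⟩
    rw [hfixh _ hySZ (hdom s).1 (hdom s).2]
    have := Int.floor_add_fract (s - p)
    linarith
  have hσa : σ a = b := by
    simp only [hσ]
    have hfr : Int.fract (a - p) = a - p := Int.fract_eq_self.mpr ⟨by linarith, by linarith⟩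
    have hfl : ⌊a - p⌋ = 0 := Int.floor_eq_zero_iff.mpr ⟨by linarith, by linarith⟩
    rw [hfr, hfl]
    push_cast
    rw [show p + (a - p) = a by ring, hha]
    ring
  exact ⟨σ, ⟨⟨⟨hmono.injective, hsurj⟩, hmono, hper⟩, hfixS⟩, hσa⟩

lemma foldr_comp_eval (l : List (ℝ → ℝ)) (g : ℝ → ℝ) (x : ℝ) :
    (List.foldr (· ∘ ·) id (l ++ [g])) x = (List.foldr (· ∘ ·) id l) (g x) := by
  induction l with
  | nil => rfl
  | cons f l ih => simp only [List.cons_append, List.foldr_cons, Function.comp_apply, ih]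

section Reach

variable (F F' : Set ℝ) (t t' v : ℝ)

/-- A single direct move when there are no obstacles strictly between `x` and `v`. -/
lemma reach_direct (hFfin : F.Finite) (hF'fin : F'.Finite)
    (hFsub : F ⊆ Set.Ico (0:ℝ) 1) (hF'sub : F' ⊆ Set.Ico (0:ℝ) 1)
    (hSZF : ∀ z, z ∈ SZ F ↔ z ∈ SZ (F ∩ F') ∨ z ∈ SZ {t})
    (hSZF' : ∀ z, z ∈ SZ F' ↔ z ∈ SZ (F ∩ F') ∨ z ∈ SZ {t'})
    (hdisj : ∀ z ∈ SZ {t}, z ∉ SZ {t'})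
    (x : ℝ) (hxv : x ≠ v)
    (hG : ∀ z ∈ SZ (F ∩ F'), (z < x ∧ z < v) ∨ (x < z ∧ v < z))
    (hxt : x ∉ SZ {t}) (hxt' : x ∉ SZ {t'})
    (hobs : ∀ z, z ∈ SZ {t} ∪ SZ {t'} → z ∉ Set.Ioo (min x v) (max x v)) :
    ∃ σ, (IsSTimedAutomorphism F σ ∨ IsSTimedAutomorphism F' σ) ∧ σ x = v := by
  by_cases hvt : v ∈ SZ {t}
  · -- use an F'-timed move (F' contains t' but not t)
    have hsep : ∀ z ∈ SZ F', (z < x ∧ z < v) ∨ (x < z ∧ v < z) := by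
      intro z hz
      rcases (hSZF' z).mp hz with hzG | hzt'
      · exact hG z hzG
      · have hnotIoo := hobs z (Or.inr hzt')
        rw [Set.mem_Ioo, not_and_or, not_lt, not_lt] at hnotIoo
        have hzx : z ≠ x := fun h => hxt' (h ▸ hzt')
        have hzv : z ≠ v := fun h => (hdisj v hvt) (h ▸ hzt')
        rcases hnotIoo with h1 | h1
        · have : z ≤ min x v := h1
          rcases lt_or_ge z (min x v) with h2 | h2
          · exact Or.inl ⟨lt_of_lt_of_le h2 (min_le_left x v), lt_of_lt_of_le h2 (min_le_right x v)⟩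
          · have : z = min x v := le_antisymm h1 h2
            rcases min_cases x v with ⟨he, _⟩ | ⟨he, _⟩
            · exact absurd (this.trans he) hzx
            · exact absurd (this.trans he) hzv
        · have : max x v ≤ z := h1
          rcases lt_or_ge (max x v) z with h2 | h2
          · exact Or.inr ⟨lt_of_le_of_lt (le_max_left x v) h2, lt_of_le_of_lt (le_max_right x v) h2⟩
          · have : z = max x v := le_antisymm h2 h1
            rcases max_cases x v with ⟨he, _⟩ | ⟨he, _⟩
            · exact absurd (this.trans he) hzx
            · exact absurd (this.trans he) hzv
    obtain ⟨σ, hσ, hσx⟩ := exists_move F' hF'fin hF'sub x v hsep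
    exact ⟨σ, Or.inr hσ, hσx⟩
  · -- use an F-timed move
    have hsep : ∀ z ∈ SZ F, (z < x ∧ z < v) ∨ (x < z ∧ v < z) := by
      intro z hz
      rcases (hSZF z).mp hz with hzG | hzt
      · exact hG z hzG
      · have hnotIoo := hobs z (Or.inl hzt)
        rw [Set.mem_Ioo, not_and_or, not_lt, not_lt] at hnotIoo
        have hzx : z ≠ x := fun h => hxt (h ▸ hzt)
        have hzv : z ≠ v := fun h => hvt (h ▸ hzt)
        rcases hnotIoo with h1 | h1
        · rcases lt_or_ge z (min x v) with h2 | h2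
          · exact Or.inl ⟨lt_of_lt_of_le h2 (min_le_left x v), lt_of_lt_of_le h2 (min_le_right x v)⟩
          · have : z = min x v := le_antisymm h1 h2
            rcases min_cases x v with ⟨he, _⟩ | ⟨he, _⟩
            · exact absurd (this.trans he) hzx
            · exact absurd (this.trans he) hzv
        · rcases lt_or_ge (max x v) z with h2 | h2
          · exact Or.inr ⟨lt_of_le_of_lt (le_max_left x v) h2, lt_of_le_of_lt (le_max_right x v) h2⟩
          · have : z = max x v := le_antisymm h2 h1
            rcases max_cases x v with ⟨he, _⟩ | ⟨he, _⟩
            · exact absurd (this.trans he) hzx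
            · exact absurd (this.trans he) hzv
    obtain ⟨σ, hσ, hσx⟩ := exists_move F hFfin hFsub x v hsep
    exact ⟨σ, Or.inl hσ, hσx⟩

end Reach

lemma reach_fwd (F F' : Set ℝ) (t t' v : ℝ)
    (hFfin : F.Finite) (hF'fin : F'.Finite)
    (hFsub : F ⊆ Set.Ico (0:ℝ) 1) (hF'sub : F' ⊆ Set.Ico (0:ℝ) 1)
    (hSZF : ∀ z, z ∈ SZ F ↔ z ∈ SZ (F ∩ F') ∨ z ∈ SZ {t})
    (hSZF' : ∀ z, z ∈ SZ F' ↔ z ∈ SZ (F ∩ F') ∨ z ∈ SZ {t'})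
    (hdisj : ∀ z ∈ SZ {t}, z ∉ SZ {t'}) :
    ∀ n : ℕ, ∀ x : ℝ, x < v →
      (∀ z ∈ SZ (F ∩ F'), z < x ∨ v < z) →
      x ∉ SZ {t} → x ∉ SZ {t'} →
      ((SZ {t} ∪ SZ {t'}) ∩ Set.Ioo x v).ncard ≤ n →
      ∃ l : List (ℝ → ℝ),
        (∀ σ ∈ l, IsSTimedAutomorphism F σ ∨ IsSTimedAutomorphism F' σ) ∧
        (l.foldr (· ∘ ·) id) x = v := by
  intro n
  induction n with
  | zero =>
      intro x hxv hG hxt hxt' hcard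
      set D := (SZ {t} ∪ SZ {t'}) ∩ Set.Ioo x v with hD
      have hDfin : D.Finite := by
        rw [hD, Set.union_inter_distrib_right]
        exact (SZ_inter_Ioo_finite t x v).union (SZ_inter_Ioo_finite t' x v)
      have hDempty : D = ∅ := by
        rw [← Set.ncard_eq_zero hDfin] at *
        omega
      obtain ⟨σ, hσ, hσx⟩ := reach_direct F F' t t' v hFfin hF'fin hFsub hF'sub hSZF hSZF' hdisj x
        (ne_of_lt hxv)
        (fun z hz => (hG z hz).elim (fun h => Or.inl ⟨h, by linarith⟩) (fun h => Or.inr ⟨by linarith, h⟩))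
        hxt hxt'
        (by
          intro z hz hmem
          rw [min_eq_left (le_of_lt hxv), max_eq_right (le_of_lt hxv)] at hmem
          have : z ∈ D := ⟨hz, hmem⟩
          rw [hDempty] at this
          exact this)
      exact ⟨[σ], by simp [hσ], by simp [hσx]⟩
  | succ n ih =>
      intro x hxv hG hxt hxt' hcard
      set D := (SZ {t} ∪ SZ {t'}) ∩ Set.Ioo x v with hD
      have hDfin : D.Finite := by
        rw [hD, Set.union_inter_distrib_right]
        exact (SZ_inter_Ioo_finite t x v).union (SZ_inter_Ioo_finite t' x v)
      by_cases hDne : D.Nonempty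
      · -- there is a nearest obstacle d
        obtain ⟨d, hdD, hdmin⟩ := Set.exists_min_image D id hDfin hDne
        obtain ⟨hdmem, hdx, hdv⟩ := hdD
        obtain ⟨e, he1, he2, he3⟩ :
            ∃ e, d < e ∧ e ≤ v ∧ ∀ z ∈ D, d < z → e ≤ z := by
          by_cases hO' : (D ∩ Set.Ioi d).Nonempty
          · obtain ⟨e, heO, hemin⟩ := Set.exists_min_image _ id (hDfin.inter_of_left _) hO'
            exact ⟨e, heO.2, le_of_lt heO.1.2.2, fun z hz hdz => hemin z ⟨hz, hdz⟩⟩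
          · rw [Set.not_nonempty_iff_eq_empty] at hO'
            exact ⟨v, hdv, le_refl v, fun z hz hdz =>
              absurd (hO' ▸ (⟨hz, hdz⟩ : z ∈ D ∩ Set.Ioi d)) (Set.notMem_empty z)⟩
        set y := (d + e) / 2 with hy
        have hdy : d < y := by rw [hy]; linarith
        have hye : y < e := by rw [hy]; linarith
        have hxy : x < y := by linarith
        have hyv : y < v := lt_of_lt_of_le hye he2
        have hyD : y ∉ D := fun h => absurd (he3 y h hdy) (by linarith)
        have hyt : y ∉ SZ {t} := fun h => hyD ⟨Or.inl h, hxy, hyv⟩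
        have hyt' : y ∉ SZ {t'} := fun h => hyD ⟨Or.inr h, hxy, hyv⟩
        have hGy : ∀ z ∈ SZ (F ∩ F'), z < y ∨ v < z := by
          intro z hz
          rcases hG z hz with h | h
          · exact Or.inl (by linarith)
          · exact Or.inr h
        -- obtain the crossing move σ : x → y
        have hstep : ∃ σ, (IsSTimedAutomorphism F σ ∨ IsSTimedAutomorphism F' σ) ∧ σ x = y := by
          by_cases hdt : d ∈ SZ {t}
          · -- cross with an F'-move
            have hsep : ∀ z ∈ SZ F', (z < x ∧ z < y) ∨ (x < z ∧ y < z) := by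
              intro z hz
              rcases (hSZF' z).mp hz with hzG | hzt'
              · rcases hG z hzG with h | h
                · exact Or.inl ⟨h, by linarith⟩
                · exact Or.inr ⟨by linarith, by linarith⟩
              · have hzx : z ≠ x := fun h => hxt' (h ▸ hzt')
                have hzy : z ≠ y := fun h => hyt' (h ▸ hzt')
                have hnot : ¬ (x < z ∧ z < y) := by
                  rintro ⟨h1, h2⟩
                  have hzD : z ∈ D := ⟨Or.inr hzt', h1, by linarith⟩
                  have hzd : z ≠ d := fun h => (hdisj d hdt) (h ▸ hzt')
                  have : d < z := lt_of_le_of_ne (hdmin z hzD) (Ne.symm hzd)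
                  have := he3 z hzD this
                  linarith
                rw [not_and_or, not_lt, not_lt] at hnot
                rcases hnot with h1 | h1
                · exact Or.inl ⟨lt_of_le_of_ne h1 hzx, by
                    have := lt_of_le_of_ne h1 hzx; linarith⟩
                · exact Or.inr ⟨by
                    have := lt_of_le_of_ne h1 (Ne.symm hzy); linarith,
                    lt_of_le_of_ne h1 (Ne.symm hzy)⟩
            obtain ⟨σ, hσ, hσx⟩ := exists_move F' hF'fin hF'sub x y hsep
            exact ⟨σ, Or.inr hσ, hσx⟩
          · -- d ∈ SZ {t'} : cross with an F-move
            have hdt' : d ∈ SZ {t'} := hdmem.resolve_left hdt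
            have hsep : ∀ z ∈ SZ F, (z < x ∧ z < y) ∨ (x < z ∧ y < z) := by
              intro z hz
              rcases (hSZF z).mp hz with hzG | hzt
              · rcases hG z hzG with h | h
                · exact Or.inl ⟨h, by linarith⟩
                · exact Or.inr ⟨by linarith, by linarith⟩
              · have hzx : z ≠ x := fun h => hxt (h ▸ hzt)
                have hzy : z ≠ y := fun h => hyt (h ▸ hzt)
                have hnot : ¬ (x < z ∧ z < y) := by
                  rintro ⟨h1, h2⟩
                  have hzD : z ∈ D := ⟨Or.inl hzt, h1, by linarith⟩
                  have hzd : z ≠ d := fun h => (hdisj z hzt) (h ▸ hdt')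
                  have : d < z := lt_of_le_of_ne (hdmin z hzD) (Ne.symm hzd)
                  have := he3 z hzD this
                  linarith
                rw [not_and_or, not_lt, not_lt] at hnot
                rcases hnot with h1 | h1
                · exact Or.inl ⟨lt_of_le_of_ne h1 hzx, by
                    have := lt_of_le_of_ne h1 hzx; linarith⟩
                · exact Or.inr ⟨by
                    have := lt_of_le_of_ne h1 (Ne.symm hzy); linarith,
                    lt_of_le_of_ne h1 (Ne.symm hzy)⟩
            obtain ⟨σ, hσ, hσx⟩ := exists_move F hFfin hFsub x y hsep
            exact ⟨σ, Or.inl hσ, hσx⟩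
        obtain ⟨σ, hσor, hσx⟩ := hstep
        -- recursive call from y
        have hsub2 : (SZ {t} ∪ SZ {t'}) ∩ Set.Ioo y v ⊆ D \ {d} := by
          rintro z ⟨hz1, hz2, hz3⟩
          exact ⟨⟨hz1, by linarith, hz3⟩, fun h => by rw [Set.mem_singleton_iff] at h; linarith [h ▸ hz2]⟩
        have hcard2 : ((SZ {t} ∪ SZ {t'}) ∩ Set.Ioo y v).ncard ≤ n := by
          have h1 : ((SZ {t} ∪ SZ {t'}) ∩ Set.Ioo y v).ncard ≤ (D \ {d}).ncard :=
            Set.ncard_le_ncard hsub2 hDfin.sdiff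
          have h2 : (D \ {d}).ncard = D.ncard - 1 :=
            Set.ncard_diff_singleton_of_mem ⟨hdmem, hdx, hdv⟩
          have h3 : 0 < D.ncard := (Set.ncard_pos hDfin).mpr hDne
          omega
        obtain ⟨l, hl, hlx⟩ := ih y hyv hGy hyt hyt' hcard2
        refine ⟨l ++ [σ], ?_, ?_⟩
        · intro τ hτ
          rcases List.mem_append.mp hτ with h | h
          · exact hl τ h
          · rw [List.mem_singleton] at h
            exact h ▸ hσor
        · rw [foldr_comp_eval, hσx, hlx]
      · -- no obstacles: direct move
        rw [Set.not_nonempty_iff_eq_empty] at hDne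
        obtain ⟨σ, hσ, hσx⟩ := reach_direct F F' t t' v hFfin hF'fin hFsub hF'sub hSZF hSZF' hdisj x
          (ne_of_lt hxv)
          (fun z hz => (hG z hz).elim (fun h => Or.inl ⟨h, by linarith⟩) (fun h => Or.inr ⟨by linarith, h⟩))
          hxt hxt'
          (by
            intro z hz hmem
            rw [min_eq_left (le_of_lt hxv), max_eq_right (le_of_lt hxv)] at hmem
            have : z ∈ D := ⟨hz, hmem⟩
            rw [hDne] at this
            exact this)
        exact ⟨[σ], by simp [hσ], by simp [hσx]⟩

lemma reach_bwd (F F' : Set ℝ) (t t' v : ℝ)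
    (hFfin : F.Finite) (hF'fin : F'.Finite)
    (hFsub : F ⊆ Set.Ico (0:ℝ) 1) (hF'sub : F' ⊆ Set.Ico (0:ℝ) 1)
    (hSZF : ∀ z, z ∈ SZ F ↔ z ∈ SZ (F ∩ F') ∨ z ∈ SZ {t})
    (hSZF' : ∀ z, z ∈ SZ F' ↔ z ∈ SZ (F ∩ F') ∨ z ∈ SZ {t'})
    (hdisj : ∀ z ∈ SZ {t}, z ∉ SZ {t'}) :
    ∀ n : ℕ, ∀ x : ℝ, v < x →
      (∀ z ∈ SZ (F ∩ F'), z < v ∨ x < z) →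
      x ∉ SZ {t} → x ∉ SZ {t'} →
      ((SZ {t} ∪ SZ {t'}) ∩ Set.Ioo v x).ncard ≤ n →
      ∃ l : List (ℝ → ℝ),
        (∀ σ ∈ l, IsSTimedAutomorphism F σ ∨ IsSTimedAutomorphism F' σ) ∧
        (l.foldr (· ∘ ·) id) x = v := by
  intro n
  induction n with
  | zero =>
      intro x hvx hG hxt hxt' hcard
      set D := (SZ {t} ∪ SZ {t'}) ∩ Set.Ioo v x with hD
      have hDfin : D.Finite := by
        rw [hD, Set.union_inter_distrib_right]
        exact (SZ_inter_Ioo_finite t v x).union (SZ_inter_Ioo_finite t' v x)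
      have hDempty : D = ∅ := by
        rw [← Set.ncard_eq_zero hDfin] at *
        omega
      obtain ⟨σ, hσ, hσx⟩ := reach_direct F F' t t' v hFfin hF'fin hFsub hF'sub hSZF hSZF' hdisj x
        (ne_of_gt hvx)
        (fun z hz => (hG z hz).elim (fun h => Or.inl ⟨by linarith, h⟩) (fun h => Or.inr ⟨h, by linarith⟩))
        hxt hxt'
        (by
          intro z hz hmem
          rw [min_eq_right (le_of_lt hvx), max_eq_left (le_of_lt hvx)] at hmem
          have : z ∈ D := ⟨hz, hmem⟩
          rw [hDempty] at this
          exact this)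
      exact ⟨[σ], by simp [hσ], by simp [hσx]⟩
  | succ n ih =>
      intro x hvx hG hxt hxt' hcard
      set D := (SZ {t} ∪ SZ {t'}) ∩ Set.Ioo v x with hD
      have hDfin : D.Finite := by
        rw [hD, Set.union_inter_distrib_right]
        exact (SZ_inter_Ioo_finite t v x).union (SZ_inter_Ioo_finite t' v x)
      by_cases hDne : D.Nonempty
      · obtain ⟨d, hdD, hdmax⟩ := Set.exists_max_image D id hDfin hDne
        obtain ⟨hdmem, hdv, hdx⟩ := hdD
        obtain ⟨e, he1, he2, he3⟩ :
            ∃ e, e < d ∧ v ≤ e ∧ ∀ z ∈ D, z < d → z ≤ e := by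
          by_cases hO' : (D ∩ Set.Iio d).Nonempty
          · obtain ⟨e, heO, hemax⟩ := Set.exists_max_image _ id (hDfin.inter_of_left _) hO'
            exact ⟨e, heO.2, le_of_lt heO.1.2.1, fun z hz hdz => hemax z ⟨hz, hdz⟩⟩
          · rw [Set.not_nonempty_iff_eq_empty] at hO'
            exact ⟨v, hdv, le_refl v, fun z hz hdz =>
              absurd (hO' ▸ (⟨hz, hdz⟩ : z ∈ D ∩ Set.Iio d)) (Set.notMem_empty z)⟩
        set y := (d + e) / 2 with hy
        have hyd : y < d := by rw [hy]; linarith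
        have hey : e < y := by rw [hy]; linarith
        have hyx : y < x := by linarith
        have hvy : v < y := lt_of_le_of_lt he2 hey
        have hyD : y ∉ D := fun h => absurd (he3 y h hyd) (by linarith)
        have hyt : y ∉ SZ {t} := fun h => hyD ⟨Or.inl h, hvy, hyx⟩
        have hyt' : y ∉ SZ {t'} := fun h => hyD ⟨Or.inr h, hvy, hyx⟩
        have hGy : ∀ z ∈ SZ (F ∩ F'), z < v ∨ y < z := by
          intro z hz
          rcases hG z hz with h | h
          · exact Or.inl h
          · exact Or.inr (by linarith)
        have hstep : ∃ σ, (IsSTimedAutomorphism F σ ∨ IsSTimedAutomorphism F' σ) ∧ σ x = y := by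
          by_cases hdt : d ∈ SZ {t}
          · have hsep : ∀ z ∈ SZ F', (z < x ∧ z < y) ∨ (x < z ∧ y < z) := by
              intro z hz
              rcases (hSZF' z).mp hz with hzG | hzt'
              · rcases hG z hzG with h | h
                · exact Or.inl ⟨by linarith, by linarith⟩
                · exact Or.inr ⟨h, by linarith⟩
              · have hzx : z ≠ x := fun h => hxt' (h ▸ hzt')
                have hzy : z ≠ y := fun h => hyt' (h ▸ hzt')
                have hnot : ¬ (y < z ∧ z < x) := by
                  rintro ⟨h1, h2⟩
                  have hzD : z ∈ D := ⟨Or.inr hzt', by linarith, h2⟩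
                  have hzd : z ≠ d := fun h => (hdisj d hdt) (h ▸ hzt')
                  have : z < d := lt_of_le_of_ne (hdmax z hzD) hzd
                  have := he3 z hzD this
                  linarith
                rw [not_and_or, not_lt, not_lt] at hnot
                rcases hnot with h1 | h1
                · have hzy' : z < y := lt_of_le_of_ne h1 hzy
                  exact Or.inl ⟨by linarith, hzy'⟩
                · have hxz : x < z := lt_of_le_of_ne h1 (Ne.symm hzx)
                  exact Or.inr ⟨hxz, by linarith⟩
            obtain ⟨σ, hσ, hσx⟩ := exists_move F' hF'fin hF'sub x y hsep
            exact ⟨σ, Or.inr hσ, hσx⟩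
          · have hdt' : d ∈ SZ {t'} := hdmem.resolve_left hdt
            have hsep : ∀ z ∈ SZ F, (z < x ∧ z < y) ∨ (x < z ∧ y < z) := by
              intro z hz
              rcases (hSZF z).mp hz with hzG | hzt
              · rcases hG z hzG with h | h
                · exact Or.inl ⟨by linarith, by linarith⟩
                · exact Or.inr ⟨h, by linarith⟩
              · have hzx : z ≠ x := fun h => hxt (h ▸ hzt)
                have hzy : z ≠ y := fun h => hyt (h ▸ hzt)
                have hnot : ¬ (y < z ∧ z < x) := by
                  rintro ⟨h1, h2⟩
                  have hzD : z ∈ D := ⟨Or.inl hzt, by linarith, h2⟩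
                  have hzd : z ≠ d := fun h => (hdisj z hzt) (h ▸ hdt')
                  have : z < d := lt_of_le_of_ne (hdmax z hzD) hzd
                  have := he3 z hzD this
                  linarith
                rw [not_and_or, not_lt, not_lt] at hnot
                rcases hnot with h1 | h1
                · have hzy' : z < y := lt_of_le_of_ne h1 hzy
                  exact Or.inl ⟨by linarith, hzy'⟩
                · have hxz : x < z := lt_of_le_of_ne h1 (Ne.symm hzx)
                  exact Or.inr ⟨hxz, by linarith⟩
            obtain ⟨σ, hσ, hσx⟩ := exists_move F hFfin hFsub x y hsep
            exact ⟨σ, Or.inl hσ, hσx⟩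
        obtain ⟨σ, hσor, hσx⟩ := hstep
        have hsub2 : (SZ {t} ∪ SZ {t'}) ∩ Set.Ioo v y ⊆ D \ {d} := by
          rintro z ⟨hz1, hz2, hz3⟩
          exact ⟨⟨hz1, hz2, by linarith⟩, fun h => by rw [Set.mem_singleton_iff] at h; linarith [h ▸ hz3]⟩
        have hcard2 : ((SZ {t} ∪ SZ {t'}) ∩ Set.Ioo v y).ncard ≤ n := by
          have h1 : ((SZ {t} ∪ SZ {t'}) ∩ Set.Ioo v y).ncard ≤ (D \ {d}).ncard :=
            Set.ncard_le_ncard hsub2 hDfin.sdiff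
          have h2 : (D \ {d}).ncard = D.ncard - 1 :=
            Set.ncard_diff_singleton_of_mem ⟨hdmem, hdv, hdx⟩
          have h3 : 0 < D.ncard := (Set.ncard_pos hDfin).mpr hDne
          omega
        obtain ⟨l, hl, hlx⟩ := ih y hvy hGy hyt hyt' hcard2
        refine ⟨l ++ [σ], ?_, ?_⟩
        · intro τ hτ
          rcases List.mem_append.mp hτ with h | h
          · exact hl τ h
          · rw [List.mem_singleton] at h
            exact h ▸ hσor
        · rw [foldr_comp_eval, hσx, hlx]
      · rw [Set.not_nonempty_iff_eq_empty] at hDne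
        obtain ⟨σ, hσ, hσx⟩ := reach_direct F F' t t' v hFfin hF'fin hFsub hF'sub hSZF hSZF' hdisj x
          (ne_of_gt hvx)
          (fun z hz => (hG z hz).elim (fun h => Or.inl ⟨by linarith, h⟩) (fun h => Or.inr ⟨h, by linarith⟩))
          hxt hxt'
          (by
            intro z hz hmem
            rw [min_eq_right (le_of_lt hvx), max_eq_left (le_of_lt hvx)] at hmem
            have : z ∈ D := ⟨hz, hmem⟩
            rw [hDne] at this
            exact this)
        exact ⟨[σ], by simp [hσ], by simp [hσx]⟩

/-- Special case of the decomposition claim: if `F \ F' = {t}` and `F' \ F = {t'}`,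
then for every `(F ∩ F')`-timed automorphism `π` there is a finite composition of
`F`- or `F'`-timed automorphisms agreeing with `π` on `t`. -/
theorem decomposition_on_single_point
    (F F' : Set ℝ) (hF : F.Finite) (hF' : F'.Finite)
    (hFsub : F ⊆ Set.Ico (0 : ℝ) 1) (hF'sub : F' ⊆ Set.Ico (0 : ℝ) 1)
    (t t' : ℝ) (hdiff : F \ F' = {t}) (hdiff' : F' \ F = {t'}) :
    ∀ π, IsSTimedAutomorphism (F ∩ F') π →
      ∃ l : List (ℝ → ℝ),
        (∀ σ ∈ l, IsSTimedAutomorphism F σ ∨ IsSTimedAutomorphism F' σ) ∧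
        (l.foldr (· ∘ ·) id) t = π t := by
  intro π hπ
  set v := π t with hv
  have ht : t ∈ F \ F' := by rw [hdiff]; exact rfl
  have ht' : t' ∈ F' \ F := by rw [hdiff']; exact rfl
  have htI : t ∈ Set.Ico (0:ℝ) 1 := hFsub ht.1
  have ht'I : t' ∈ Set.Ico (0:ℝ) 1 := hF'sub ht'.1
  have hGsub : F ∩ F' ⊆ Set.Ico (0:ℝ) 1 := fun x hx => hFsub hx.1
  have htne : t ≠ t' := fun h => ht.2 (h ▸ ht'.1)
  have hFeq : F = (F ∩ F') ∪ {t} := by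
    ext x
    constructor
    · intro hx
      by_cases hx' : x ∈ F'
      · exact Or.inl ⟨hx, hx'⟩
      · have : x ∈ F \ F' := ⟨hx, hx'⟩
        rw [hdiff] at this
        exact Or.inr this
    · rintro (hx | hx)
      · exact hx.1
      · rw [Set.mem_singleton_iff] at hx
        exact hx ▸ ht.1
  have hF'eq : F' = (F ∩ F') ∪ {t'} := by
    ext x
    constructor
    · intro hx
      by_cases hx' : x ∈ F
      · exact Or.inl ⟨hx', hx⟩
      · have : x ∈ F' \ F := ⟨hx, hx'⟩
        rw [hdiff'] at this
        exact Or.inr this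
    · rintro (hx | hx)
      · exact hx.2
      · rw [Set.mem_singleton_iff] at hx
        exact hx ▸ ht'.1
  have hSZF : ∀ z, z ∈ SZ F ↔ z ∈ SZ (F ∩ F') ∨ z ∈ SZ {t} := by
    intro z
    conv_lhs => rw [hFeq]
    rw [SZ_union]
    exact Set.mem_union z _ _
  have hSZF' : ∀ z, z ∈ SZ F' ↔ z ∈ SZ (F ∩ F') ∨ z ∈ SZ {t'} := by
    intro z
    conv_lhs => rw [hF'eq]
    rw [SZ_union]
    exact Set.mem_union z _ _
  have hdisj : ∀ z ∈ SZ {t}, z ∉ SZ {t'} := by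
    have := SZ_disjoint htI (Set.singleton_subset_iff.mpr ht'I) (by
      rw [Set.mem_singleton_iff]; exact htne)
    exact this
  have hG_t : ∀ z ∈ SZ {t}, z ∉ SZ (F ∩ F') :=
    SZ_disjoint htI hGsub (fun h => ht.2 h.2)
  have htSZt : t ∈ SZ {t} := ⟨t, rfl, 0, by norm_num⟩
  have htnt' : t ∉ SZ {t'} := hdisj t htSZt
  have hfix : ∀ z ∈ SZ (F ∩ F'), π z = z := sfixes_SZ hπ
  have hmono : StrictMono π := hπ.1.2.1
  have hGtv : ∀ z ∈ SZ (F ∩ F'), (z < t ∧ z < v) ∨ (t < z ∧ v < z) := by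
    intro z hz
    rcases lt_trichotomy z t with h | h | h
    · refine Or.inl ⟨h, ?_⟩
      have := hmono h
      rw [hfix z hz] at this
      exact this
    · exact absurd hz (h ▸ (hG_t t htSZt))
    · refine Or.inr ⟨h, ?_⟩
      have := hmono h
      rw [hfix z hz] at this
      exact this
  rcases lt_trichotomy t v with htv | htv | htv
  · -- forward case
    set D₀ := (SZ {t} ∪ SZ {t'}) ∩ Set.Ioo t v with hD₀
    have hD₀fin : D₀.Finite := by
      rw [hD₀, Set.union_inter_distrib_right]
      exact (SZ_inter_Ioo_finite t t v).union (SZ_inter_Ioo_finite t' t v)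
    obtain ⟨e, he1, he2, he3⟩ : ∃ e, t < e ∧ e ≤ v ∧ ∀ z ∈ D₀, e ≤ z := by
      by_cases hne : D₀.Nonempty
      · obtain ⟨e, heD, hemin⟩ := Set.exists_min_image D₀ id hD₀fin hne
        exact ⟨e, heD.2.1, le_of_lt heD.2.2, hemin⟩
      · rw [Set.not_nonempty_iff_eq_empty] at hne
        exact ⟨v, htv, le_refl v, fun z hz => absurd (hne ▸ hz) (Set.notMem_empty z)⟩
    set y := (t + e) / 2 with hy
    have hty : t < y := by rw [hy]; linarith
    have hye : y < e := by rw [hy]; linarith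
    have hyv : y < v := lt_of_lt_of_le hye he2
    have hyD : y ∉ D₀ := fun h => absurd (he3 y h) (by linarith)
    have hyt : y ∉ SZ {t} := fun h => hyD ⟨Or.inl h, hty, hyv⟩
    have hyt' : y ∉ SZ {t'} := fun h => hyD ⟨Or.inr h, hty, hyv⟩
    have hsep : ∀ z ∈ SZ F', (z < t ∧ z < y) ∨ (t < z ∧ y < z) := by
      intro z hz
      rcases (hSZF' z).mp hz with hzG | hzt'
      · rcases hGtv z hzG with ⟨h1, h2⟩ | ⟨h1, h2⟩
        · exact Or.inl ⟨h1, by linarith⟩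
        · exact Or.inr ⟨h1, by linarith⟩
      · have hzt : z ≠ t := fun h => htnt' (h ▸ hzt')
        have hzy : z ≠ y := fun h => hyt' (h ▸ hzt')
        have hnot : ¬ (t < z ∧ z < y) := by
          rintro ⟨h1, h2⟩
          have : z ∈ D₀ := ⟨Or.inr hzt', h1, by linarith⟩
          have := he3 z this
          linarith
        rw [not_and_or, not_lt, not_lt] at hnot
        rcases hnot with h1 | h1
        · have := lt_of_le_of_ne h1 hzt
          exact Or.inl ⟨this, by linarith⟩
        · have := lt_of_le_of_ne h1 (Ne.symm hzy)
          exact Or.inr ⟨by linarith, this⟩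
    obtain ⟨σ₀, hσ₀, hσ₀t⟩ := exists_move F' hF' hF'sub t y hsep
    have hGy : ∀ z ∈ SZ (F ∩ F'), z < y ∨ v < z := by
      intro z hz
      rcases hGtv z hz with ⟨h1, _⟩ | ⟨_, h2⟩
      · exact Or.inl (by linarith)
      · exact Or.inr h2
    obtain ⟨l, hl, hlx⟩ := reach_fwd F F' t t' v hF hF' hFsub hF'sub hSZF hSZF' hdisj
      ((SZ {t} ∪ SZ {t'}) ∩ Set.Ioo y v).ncard y hyv hGy hyt hyt' (le_refl _)
    refine ⟨l ++ [σ₀], ?_, ?_⟩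
    · intro τ hτ
      rcases List.mem_append.mp hτ with h | h
      · exact hl τ h
      · rw [List.mem_singleton] at h
        exact h ▸ Or.inr hσ₀
    · rw [foldr_comp_eval, hσ₀t, hlx]
  · exact ⟨[], fun σ h => absurd h (List.not_mem_nil), htv⟩
  · -- backward case
    set D₀ := (SZ {t} ∪ SZ {t'}) ∩ Set.Ioo v t with hD₀
    have hD₀fin : D₀.Finite := by
      rw [hD₀, Set.union_inter_distrib_right]
      exact (SZ_inter_Ioo_finite t v t).union (SZ_inter_Ioo_finite t' v t)
    obtain ⟨e, he1, he2, he3⟩ : ∃ e, e < t ∧ v ≤ e ∧ ∀ z ∈ D₀, z ≤ e := by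
      by_cases hne : D₀.Nonempty
      · obtain ⟨e, heD, hemax⟩ := Set.exists_max_image D₀ id hD₀fin hne
        exact ⟨e, heD.2.2, le_of_lt heD.2.1, hemax⟩
      · rw [Set.not_nonempty_iff_eq_empty] at hne
        exact ⟨v, htv, le_refl v, fun z hz => absurd (hne ▸ hz) (Set.notMem_empty z)⟩
    set y := (t + e) / 2 with hy
    have hyt0 : y < t := by rw [hy]; linarith
    have hey : e < y := by rw [hy]; linarith
    have hvy : v < y := lt_of_le_of_lt he2 hey
    have hyD : y ∉ D₀ := fun h => absurd (he3 y h) (by linarith)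
    have hyt : y ∉ SZ {t} := fun h => hyD ⟨Or.inl h, hvy, hyt0⟩
    have hyt' : y ∉ SZ {t'} := fun h => hyD ⟨Or.inr h, hvy, hyt0⟩
    have hsep : ∀ z ∈ SZ F', (z < t ∧ z < y) ∨ (t < z ∧ y < z) := by
      intro z hz
      rcases (hSZF' z).mp hz with hzG | hzt'
      · rcases hGtv z hzG with ⟨h1, h2⟩ | ⟨h1, h2⟩
        · exact Or.inl ⟨h1, by linarith⟩
        · exact Or.inr ⟨h1, by linarith⟩
      · have hzt : z ≠ t := fun h => htnt' (h ▸ hzt')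
        have hzy : z ≠ y := fun h => hyt' (h ▸ hzt')
        have hnot : ¬ (y < z ∧ z < t) := by
          rintro ⟨h1, h2⟩
          have : z ∈ D₀ := ⟨Or.inr hzt', by linarith, h2⟩
          have := he3 z this
          linarith
        rw [not_and_or, not_lt, not_lt] at hnot
        rcases hnot with h1 | h1
        · have := lt_of_le_of_ne h1 hzy
          exact Or.inl ⟨by linarith, this⟩
        · have := lt_of_le_of_ne h1 (Ne.symm hzt)
          exact Or.inr ⟨this, by linarith⟩
    obtain ⟨σ₀, hσ₀, hσ₀t⟩ := exists_move F' hF' hF'sub t y hsep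
    have hGy : ∀ z ∈ SZ (F ∩ F'), z < v ∨ y < z := by
      intro z hz
      rcases hGtv z hz with ⟨_, h2⟩ | ⟨h1, _⟩
      · exact Or.inl h2
      · exact Or.inr (by linarith)
    obtain ⟨l, hl, hlx⟩ := reach_bwd F F' t t' v hF hF' hFsub hF'sub hSZF hSZF' hdisj
      ((SZ {t} ∪ SZ {t'}) ∩ Set.Ioo v y).ncard y hvy hGy hyt hyt' (le_refl _)
    refine ⟨l ++ [σ₀], ?_, ?_⟩
    · intro τ hτ
      rcases List.mem_append.mp hτ with h | h
      · exact hl τ h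
      · rw [List.mem_singleton] at h
        exact h ▸ Or.inr hσ₀
    · rw [foldr_comp_eval, hσ₀t, hlx]
end

section
/- Timed automorphisms preserve satisfaction of clock constraints under the reset-point semantics: if μ : X → ℝ, now ∈ ℝ, φ is a clock constraint (Boolean combination of atoms x − y ∼ z and x ∼ z with integer z), and the valuation x ↦ now − μ(x) satisfies φ, then for any timed automorphism π, the valuation x ↦ π(now) − π(μ(x)) also satisfies φ. -/
/-- Comparison operators appearing in clock constraints. -/
inductive CmpOp where
  | lt | le | eq | ge | gt

def CmpOp.holds : CmpOp → ℝ → ℝ → Prop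
  | .lt, a, b => a < b
  | .le, a, b => a ≤ b
  | .eq, a, b => a = b
  | .ge, a, b => a ≥ b
  | .gt, a, b => a > b

/-- Clock constraints: Boolean combinations of comparisons of clock values and of
differences of clock values with integer constants. -/
inductive ClockConstraint (X : Type*) where
  | tt : ClockConstraint X
  | ff : ClockConstraint X
  | diff : X → X → CmpOp → ℤ → ClockConstraint X
  | single : X → CmpOp → ℤ → ClockConstraint X
  | not : ClockConstraint X → ClockConstraint X
  | and : ClockConstraint X → ClockConstraint X → ClockConstraint X
  | or : ClockConstraint X → ClockConstraint X → ClockConstraint X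

/-- Satisfaction of a clock constraint by a clock valuation `ν : X → ℝ`. -/
def ClockConstraint.sat {X : Type*} (ν : X → ℝ) : ClockConstraint X → Prop
  | .tt => True
  | .ff => False
  | .diff x y c z => CmpOp.holds c (ν x - ν y) (z : ℝ)
  | .single x c z => CmpOp.holds c (ν x) (z : ℝ)
  | .not φ => ¬ ClockConstraint.sat ν φ
  | .and φ ψ => ClockConstraint.sat ν φ ∧ ClockConstraint.sat ν ψ
  | .or φ ψ => ClockConstraint.sat ν φ ∨ ClockConstraint.sat ν ψ

/-- All integer constants of the constraint have absolute value at most `m`. -/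
def ClockConstraint.constBounded {X : Type*} (m : ℕ) : ClockConstraint X → Prop
  | .tt => True
  | .ff => True
  | .diff _ _ _ z => z.natAbs ≤ m
  | .single _ _ z => z.natAbs ≤ m
  | .not φ => ClockConstraint.constBounded m φ
  | .and φ ψ => ClockConstraint.constBounded m φ ∧ ClockConstraint.constBounded m ψ
  | .or φ ψ => ClockConstraint.constBounded m φ ∧ ClockConstraint.constBounded m ψ

/-- A (nondeterministic) timed automaton over alphabet `A`, locations `Q`, clocks `X`.
A rule `(p, a, φ, Y, q)` reads letter `a` in location `p`, tests guard `φ`, resets the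
clocks in `Y` and moves to location `q`. -/
structure TimedAutomaton (A Q X : Type*) where
  init : Set Q
  final : Set Q
  rules : Set (Q × A × ClockConstraint X × Set X × Q)

/-- A configuration in the reset-point semantics: a location, a reset-point
assignment for the clocks, and the current timestamp. -/
abbrev TAConfig (Q X : Type*) := Q × (X → ℝ) × ℝ

/-- One transition of the reset-point semantics: at time `t ≥ now`, the guard of some
rule is satisfied by the valuation `x ↦ t - μ x`; clocks in the reset set get reset
point `t`, the others keep their reset points. -/
def TimedAutomaton.Step {A Q X : Type*} (Aut : TimedAutomaton A Q X)
    (c : TAConfig Q X) (e : A × ℝ) (c' : TAConfig Q X) : Prop :=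
  c'.2.2 = e.2 ∧ c.2.2 ≤ e.2 ∧
  ∃ φ Y, (c.1, e.1, φ, Y, c'.1) ∈ Aut.rules ∧
    ClockConstraint.sat (fun x => e.2 - c.2.1 x) φ ∧
    (∀ x ∈ Y, c'.2.1 x = e.2) ∧ (∀ x ∉ Y, c'.2.1 x = c.2.1 x)

/-- Runs of a timed automaton over a timed word. -/
inductive TimedAutomaton.Run {A Q X : Type*} (Aut : TimedAutomaton A Q X) :
    TAConfig Q X → List (A × ℝ) → TAConfig Q X → Prop
  | nil (c : TAConfig Q X) : Aut.Run c [] c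
  | cons {c c' c'' : TAConfig Q X} {e : A × ℝ} {w : List (A × ℝ)} :
      Aut.Step c e c' → Aut.Run c' w c'' → Aut.Run c (e :: w) c''

/-- Language of a configuration: timed words admitting an accepting run from it. -/
def TimedAutomaton.LangFrom {A Q X : Type*} (Aut : TimedAutomaton A Q X)
    (c : TAConfig Q X) : Set (List (A × ℝ)) :=
  {w | ∃ c', Aut.Run c w c' ∧ c'.1 ∈ Aut.final}

/-- Language of a timed automaton: union over initial configurations. -/
def TimedAutomaton.Lang {A Q X : Type*} (Aut : TimedAutomaton A Q X) :
    Set (List (A × ℝ)) :=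
  {w | ∃ p ∈ Aut.init, w ∈ Aut.LangFrom (p, fun _ => 0, 0)}

/-- A configuration is reachable if some run from an initial configuration ends in it. -/
def TimedAutomaton.Reachable {A Q X : Type*} (Aut : TimedAutomaton A Q X)
    (c : TAConfig Q X) : Prop :=
  ∃ p ∈ Aut.init, ∃ w, Aut.Run (p, fun _ => 0, 0) w c

/-- Determinism: unique initial location, and two rules from the same location on the
same letter with jointly satisfiable guards agree on resets and target. -/
def TimedAutomaton.IsDeterministic {A Q X : Type*} (Aut : TimedAutomaton A Q X) : Prop :=
  (∃! p, p ∈ Aut.init) ∧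
  ∀ p a φ Y q φ' Y' q', (p, a, φ, Y, q) ∈ Aut.rules → (p, a, φ', Y', q') ∈ Aut.rules →
    (∃ ν : X → ℝ, ClockConstraint.sat ν φ ∧ ClockConstraint.sat ν φ') →
    Y = Y' ∧ q = q'

lemma pi_add_int (π : ℝ → ℝ) (hπ : IsTimedAutomorphism π) (x : ℝ) (z : ℤ) :
    π (x + z) = π x + z := by
  obtain ⟨-, -, h1⟩ := hπ
  induction z using Int.induction_on with
  | zero => simp
  | succ n ih => push_cast; rw [← add_assoc, h1]; push_cast at ih; rw [ih]; ring
  | pred n ih =>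
      push_cast; push_cast at ih
      have := h1 (x + (-(n:ℝ) - 1))
      rw [show x + (-(n:ℝ) - 1) + 1 = x + -n by ring] at this
      rw [ih] at this; linarith

lemma cmp_iff (π : ℝ → ℝ) (hπ : IsTimedAutomorphism π) (c : CmpOp) (a b : ℝ) (z : ℤ) :
    CmpOp.holds c (a - b) z ↔ CmpOp.holds c (π a - π b) z := by
  have hmono := hπ.2.1
  have key : ∀ u v : ℝ, ∀ w : ℤ, (u - v < w ↔ π u - π v < w) := by
    intro u v w
    rw [sub_lt_iff_lt_add', sub_lt_iff_lt_add', ← pi_add_int π hπ v w, hmono.lt_iff_lt]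
  have keye : ∀ u v : ℝ, ∀ w : ℤ, (u - v = w ↔ π u - π v = w) := by
    intro u v w
    rw [sub_eq_iff_eq_add', sub_eq_iff_eq_add', ← pi_add_int π hπ v w,
      hmono.injective.eq_iff]
  have keyle : ∀ u v : ℝ, ∀ w : ℤ, (u - v ≤ w ↔ π u - π v ≤ w) := by
    intro u v w
    constructor <;> intro h <;> rcases eq_or_lt_of_le h with h' | h'
    · exact le_of_eq ((keye u v w).mp h')
    · exact le_of_lt ((key u v w).mp h')
    · exact le_of_eq ((keye u v w).mpr h')
    · exact le_of_lt ((key u v w).mpr h')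
  cases c with
  | lt => exact key a b z
  | le => exact keyle a b z
  | eq => exact keye a b z
  | ge => simpa [CmpOp.holds, ge_iff_le, ← not_lt] using not_congr (key a b z)
  | gt => simpa [CmpOp.holds, ← not_le] using not_congr (keyle a b z)

lemma sat_iff_aux {X : Type*} (π : ℝ → ℝ) (hπ : IsTimedAutomorphism π)
    (μ : X → ℝ) (now : ℝ) (φ : ClockConstraint X) :
    ClockConstraint.sat (fun x => now - μ x) φ ↔
    ClockConstraint.sat (fun x => π now - π (μ x)) φ := by
  induction φ with
  | tt => simp [ClockConstraint.sat]
  | ff => simp [ClockConstraint.sat]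
  | diff x y c z =>
      show CmpOp.holds c ((now - μ x) - (now - μ y)) z ↔
        CmpOp.holds c ((π now - π (μ x)) - (π now - π (μ y))) z
      rw [show (now - μ x) - (now - μ y) = μ y - μ x by ring,
        show (π now - π (μ x)) - (π now - π (μ y)) = π (μ y) - π (μ x) by ring]
      exact cmp_iff π hπ c (μ y) (μ x) z
  | single x c z => exact cmp_iff π hπ c now (μ x) z
  | not φ ih => exact not_congr ih
  | and φ ψ ih1 ih2 => exact and_congr ih1 ih2
  | or φ ψ ih1 ih2 => exact or_congr ih1 ih2

/-- Timed automorphisms preserve satisfaction of clock constraints under the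
reset-point semantics. -/
theorem sat_invariant_under_timed_automorphism
    {X : Type*} (π : ℝ → ℝ) (hπ : IsTimedAutomorphism π)
    (μ : X → ℝ) (now : ℝ) (φ : ClockConstraint X)
    (h : ClockConstraint.sat (fun x => now - μ x) φ) :
    ClockConstraint.sat (fun x => π now - π (μ x)) φ := by
  exact (sat_iff_aux π hπ μ now φ).mp h
end
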